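/- For Hermitian matrices A and B (over ℂ, of the same finite dimension) and any unitarily invariant matrix norm ‖·‖, one has ‖exp(iA) − exp(iB)‖ ≤ ‖A − B‖. -/

import Mathlib

open scoped Matrix.Norms.L2Operator

open NormedSpace Nat Matrix

lemma my_exp_tail_bound {𝔸 : Type*} [NormedRing 𝔸] [NormedAlgebra ℂ 𝔸] [CompleteSpace 𝔸]
    (x : 𝔸) : ‖exp x - 1 - x‖ ≤ ‖x‖ ^ 2 * Real.exp ‖x‖ := by
  have hs : Summable fun k : ℕ => ((k ! : ℂ))⁻¹ • x ^ k := expSeries_summable' (𝕂 := ℂ) x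
  have hkey : exp x - 1 - x = ∑' k : ℕ, (((k + 2)! : ℂ))⁻¹ • x ^ (k + 2) := by
    have h2 := Summable.sum_add_tsum_nat_add 2 hs
    have : (∑ i ∈ Finset.range 2, ((i ! : ℂ))⁻¹ • x ^ i) = 1 + x := by
      simp [Finset.sum_range_succ]
    rw [this] at h2
    rw [exp_eq_tsum ℂ]
    show (∑' n : ℕ, ((n ! : ℂ))⁻¹ • x ^ n) - 1 - x = _
    rw [← h2]
    abel
  rw [hkey]
  have hns : Summable fun k : ℕ => ‖((k ! : ℂ))⁻¹ • x ^ k‖ :=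
    norm_expSeries_summable' (𝕂 := ℂ) x
  have hns2 : Summable fun k : ℕ => ‖(((k + 2)! : ℂ))⁻¹ • x ^ (k + 2)‖ :=
    (summable_nat_add_iff 2).2 hns
  refine (norm_tsum_le_tsum_norm hns2).trans ?_
  have hsum2 : Summable fun k : ℕ => ‖x‖ ^ 2 * (‖x‖ ^ k / k !) :=
    (Real.summable_pow_div_factorial ‖x‖).mul_left _
  refine (Summable.tsum_le_tsum (fun k => ?_) hns2 hsum2).trans ?_
  · rw [norm_smul]
    have h1 : ‖((((k + 2)! : ℂ)))⁻¹‖ = ((k + 2)! : ℝ)⁻¹ := by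
      rw [norm_inv]
      simp
    rw [h1]
    have h2 : ‖x ^ (k + 2)‖ ≤ ‖x‖ ^ (k + 2) := norm_pow_le' x (by omega)
    have h3 : (((k + 2)! : ℝ))⁻¹ ≤ ((k ! : ℝ))⁻¹ := by
      apply inv_anti₀
      · positivity
      · exact_mod_cast Nat.factorial_le (by omega)
    calc ((k + 2)! : ℝ)⁻¹ * ‖x ^ (k + 2)‖ ≤ ((k !) : ℝ)⁻¹ * ‖x‖ ^ (k + 2) := by
          apply mul_le_mul h3 h2 (norm_nonneg _) (by positivity)
      _ = ‖x‖ ^ 2 * (‖x‖ ^ k / k !) := by ring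
  · rw [tsum_mul_left]
    have : ∑' k : ℕ, ‖x‖ ^ k / k ! = Real.exp ‖x‖ := by
      rw [Real.exp_eq_exp_ℝ, exp_eq_tsum_div]
    rw [this]

/-- For Hermitian matrices `A`, `B` and any unitarily invariant matrix norm `N`,
`N (exp (iA) - exp (iB)) ≤ N (A - B)`. -/
theorem unitarily_invariant_norm_exp_diff_le
    (n : ℕ) (A B : Matrix (Fin n) (Fin n) ℂ)
    (hA : A.IsHermitian) (hB : B.IsHermitian)
    (N : Matrix (Fin n) (Fin n) ℂ → ℝ)
    (hN_nonneg : ∀ M, 0 ≤ N M)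
    (hN_zero : ∀ M, N M = 0 ↔ M = 0)
    (hN_add : ∀ M₁ M₂, N (M₁ + M₂) ≤ N M₁ + N M₂)
    (hN_smul : ∀ (c : ℂ) M, N (c • M) = ‖c‖ * N M)
    (hN_unitary : ∀ U V M, U ∈ Matrix.unitaryGroup (Fin n) ℂ →
      V ∈ Matrix.unitaryGroup (Fin n) ℂ → N (U * M * V) = N M) :
    N (NormedSpace.exp (Complex.I • A) - NormedSpace.exp (Complex.I • B)) ≤ N (A - B) := by
  classical
  -- basic properties of N
  have N0 : N 0 = 0 := (hN_zero 0).2 rfl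
  have Nneg : ∀ M, N (-M) = N M := by
    intro M
    have := hN_smul (-1) M
    simpa using this
  have Nsub : ∀ M₁ M₂, N (M₁ - M₂) ≤ N M₁ + N M₂ := by
    intro M₁ M₂
    rw [sub_eq_add_neg]
    exact (hN_add _ _).trans (by rw [Nneg])
  -- left and right unitary invariance
  have hUL : ∀ U M, U ∈ Matrix.unitaryGroup (Fin n) ℂ → N (U * M) = N M := by
    intro U M hU
    have := hN_unitary U 1 M hU (one_mem _)
    simpa using this
  have hUR : ∀ V M, V ∈ Matrix.unitaryGroup (Fin n) ℂ → N (M * V) = N M := by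
    intro V M hV
    have := hN_unitary 1 V M (one_mem _) hV
    simpa using this
  -- power difference bound
  have hpow : ∀ (m : ℕ) (X Y : Matrix (Fin n) (Fin n) ℂ),
      X ∈ Matrix.unitaryGroup (Fin n) ℂ → Y ∈ Matrix.unitaryGroup (Fin n) ℂ →
      N (X ^ m - Y ^ m) ≤ m * N (X - Y) := by
    intro m
    induction m with
    | zero => intro X Y _ _; simp [N0]
    | succ m ih =>
      intro X Y hX hY
      have hdecomp : X ^ (m + 1) - Y ^ (m + 1) = X ^ m * (X - Y) + (X ^ m - Y ^ m) * Y := by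
        noncomm_ring
      calc N (X ^ (m + 1) - Y ^ (m + 1))
          ≤ N (X ^ m * (X - Y)) + N ((X ^ m - Y ^ m) * Y) := by
            rw [hdecomp]; exact hN_add _ _
        _ = N (X - Y) + N (X ^ m - Y ^ m) := by
            rw [hUL _ _ (pow_mem hX m), hUR _ _ hY]
        _ ≤ N (X - Y) + m * N (X - Y) := by
            exact add_le_add_right (ih X Y hX hY) _
        _ = (m + 1 : ℕ) * N (X - Y) := by push_cast; ring
  -- entrywise bound by the L2 operator norm
  have hentry : ∀ (M : Matrix (Fin n) (Fin n) ℂ) (i j : Fin n), ‖M i j‖ ≤ ‖M‖ := by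
    intro M i j
    set x : EuclideanSpace ℂ (Fin n) := EuclideanSpace.single j (1 : ℂ) with hx
    have h1 : ‖(EuclideanSpace.equiv (Fin n) ℂ).symm (M *ᵥ x)‖ ≤ ‖M‖ * ‖x‖ :=
      Matrix.l2_opNorm_mulVec M x
    have hxnorm : ‖x‖ = 1 := by simp [hx]
    set v : EuclideanSpace ℂ (Fin n) := (EuclideanSpace.equiv (Fin n) ℂ).symm (M *ᵥ x) with hv
    have hvi : v i = M i j := by
      show (M *ᵥ (EuclideanSpace.single j (1:ℂ) : EuclideanSpace ℂ (Fin n))) i = M i j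
      have : ((EuclideanSpace.single j (1:ℂ) : EuclideanSpace ℂ (Fin n)) : Fin n → ℂ)
          = Pi.single j 1 := by
        ext k
        simp [EuclideanSpace.single_apply, Pi.single_apply, eq_comm]
      rw [this, Matrix.mulVec_single]
      simp
    have hcoord : ‖v i‖ ≤ ‖v‖ := by
      have := norm_inner_le_norm (𝕜 := ℂ) (EuclideanSpace.single i (1 : ℂ)) v
      rw [EuclideanSpace.inner_single_left] at this
      simpa using this
    rw [← hvi]
    calc ‖v i‖ ≤ ‖v‖ := hcoord
      _ ≤ ‖M‖ * ‖x‖ := h1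
      _ = ‖M‖ := by rw [hxnorm, mul_one]
  -- subadditivity over finite sums
  have hNsum : ∀ (s : Finset (Fin n × Fin n)) (f : Fin n × Fin n → Matrix (Fin n) (Fin n) ℂ),
      N (∑ p ∈ s, f p) ≤ ∑ p ∈ s, N (f p) := by
    intro s f
    induction s using Finset.induction with
    | empty => simp [N0]
    | insert _ _ hp ih =>
      rename_i a s'
      rw [Finset.sum_insert hp, Finset.sum_insert hp]
      exact (hN_add _ _).trans (add_le_add_right ih _)
  -- comparison constant
  set C : ℝ := ∑ p : Fin n × Fin n, N (Matrix.single p.1 p.2 (1 : ℂ)) with hCdef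
  have hC0 : 0 ≤ C := Finset.sum_nonneg fun p _ => hN_nonneg _
  have hNC : ∀ M : Matrix (Fin n) (Fin n) ℂ, N M ≤ C * ‖M‖ := by
    intro M
    have hM : M = ∑ p : Fin n × Fin n, (M p.1 p.2) • Matrix.single p.1 p.2 (1 : ℂ) := by
      conv_lhs => rw [Matrix.matrix_eq_sum_single M]
      rw [← Finset.sum_product']
      refine Finset.sum_congr rfl fun p _ => ?_
      rw [Matrix.smul_single]
      simp
    calc N M = N (∑ p : Fin n × Fin n, (M p.1 p.2) • Matrix.single p.1 p.2 (1 : ℂ)) := by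
          rw [← hM]
      _ ≤ ∑ p : Fin n × Fin n, N ((M p.1 p.2) • Matrix.single p.1 p.2 (1 : ℂ)) :=
          hNsum _ _
      _ = ∑ p : Fin n × Fin n, ‖M p.1 p.2‖ * N (Matrix.single p.1 p.2 (1 : ℂ)) := by
          refine Finset.sum_congr rfl fun p _ => hN_smul _ _
      _ ≤ ∑ p : Fin n × Fin n, ‖M‖ * N (Matrix.single p.1 p.2 (1 : ℂ)) := by
          refine Finset.sum_le_sum fun p _ => ?_
          exact mul_le_mul_of_nonneg_right (hentry M p.1 p.2) (hN_nonneg _)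
      _ = C * ‖M‖ := by rw [← Finset.mul_sum, mul_comm]
  -- unitarity of the exponentials
  have hunit : ∀ (M : Matrix (Fin n) (Fin n) ℂ), M.IsHermitian → ∀ (c : ℂ), c.re = 0 →
      NormedSpace.exp (c • M) ∈ Matrix.unitaryGroup (Fin n) ℂ := by
    intro M hM c hc
    letI : NormedAlgebra ℚ (Matrix (Fin n) (Fin n) ℂ) := NormedAlgebra.restrictScalars ℚ ℂ _
    apply exp_mem_unitary_of_mem_skewAdjoint
    rw [skewAdjoint.mem_iff]
    rw [star_smul, Matrix.star_eq_conjTranspose, hM.eq]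
    rw [← neg_smul]
    congr 1
    rw [← Complex.re_add_im c, hc]
    simp [Complex.ext_iff]
  -- the per-m estimate
  set r : ℝ := ‖A‖ ^ 2 * Real.exp ‖A‖ + ‖B‖ ^ 2 * Real.exp ‖B‖ with hrdef
  have hr0 : 0 ≤ r := by positivity
  have key : ∀ m : ℕ, 1 ≤ m →
      N (exp (Complex.I • A) - exp (Complex.I • B)) ≤ N (A - B) + C * r * (1 / m) := by
    intro m hm
    have hm0 : (0:ℝ) < m := by exact_mod_cast hm
    have hmC : ((m : ℕ) : ℂ) ≠ 0 := by exact_mod_cast hm0.ne'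
    set c : ℂ := ((m : ℕ) : ℂ)⁻¹ * Complex.I with hcdef
    have hcre : c.re = 0 := by
      simp [hcdef, Complex.mul_re, Complex.inv_im, Complex.inv_re]
    have hcnorm : ‖c‖ = ((m : ℝ))⁻¹ := by
      rw [hcdef, norm_mul, Complex.norm_I, mul_one, norm_inv]
      simp
    set u : Matrix (Fin n) (Fin n) ℂ := c • A with hudef
    set v : Matrix (Fin n) (Fin n) ℂ := c • B with hvdef
    set X : Matrix (Fin n) (Fin n) ℂ := exp u with hXdef
    set Y : Matrix (Fin n) (Fin n) ℂ := exp v with hYdef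
    have hXu : X ∈ Matrix.unitaryGroup (Fin n) ℂ := hunit A hA c hcre
    have hYu : Y ∈ Matrix.unitaryGroup (Fin n) ℂ := hunit B hB c hcre
    have hXm : X ^ m = exp (Complex.I • A) := by
      rw [hXdef, ← Matrix.exp_nsmul]
      congr 1
      rw [hudef, ← Nat.cast_smul_eq_nsmul ℂ, smul_smul, hcdef]
      congr 1
      field_simp
    have hYm : Y ^ m = exp (Complex.I • B) := by
      rw [hYdef, ← Matrix.exp_nsmul]
      congr 1
      rw [hvdef, ← Nat.cast_smul_eq_nsmul ℂ, smul_smul, hcdef]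
      congr 1
      field_simp
    have hunorm : ‖u‖ = ((m:ℝ))⁻¹ * ‖A‖ := by rw [hudef, norm_smul, hcnorm]
    have hvnorm : ‖v‖ = ((m:ℝ))⁻¹ * ‖B‖ := by rw [hvdef, norm_smul, hcnorm]
    have hminv1 : ((m:ℝ))⁻¹ ≤ 1 := by
      rw [inv_le_one_iff₀]; right; exact_mod_cast hm
    have hminv0 : (0:ℝ) ≤ ((m:ℝ))⁻¹ := by positivity
    -- tail bounds
    have htailA : N (X - 1 - u) ≤ C * (((m:ℝ))⁻¹ ^ 2 * (‖A‖ ^ 2 * Real.exp ‖A‖)) := by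
      refine (hNC _).trans ?_
      refine mul_le_mul_of_nonneg_left ?_ hC0
      refine (my_exp_tail_bound u).trans ?_
      rw [hunorm]
      have hexp : Real.exp (((m:ℝ))⁻¹ * ‖A‖) ≤ Real.exp ‖A‖ := by
        apply Real.exp_le_exp.2
        nlinarith [norm_nonneg A]
      nlinarith [norm_nonneg A, Real.exp_pos (((m:ℝ))⁻¹ * ‖A‖), Real.exp_pos ‖A‖]
    have htailB : N (Y - 1 - v) ≤ C * (((m:ℝ))⁻¹ ^ 2 * (‖B‖ ^ 2 * Real.exp ‖B‖)) := by
      refine (hNC _).trans ?_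
      refine mul_le_mul_of_nonneg_left ?_ hC0
      refine (my_exp_tail_bound v).trans ?_
      rw [hvnorm]
      have hexp : Real.exp (((m:ℝ))⁻¹ * ‖B‖) ≤ Real.exp ‖B‖ := by
        apply Real.exp_le_exp.2
        nlinarith [norm_nonneg B]
      nlinarith [norm_nonneg B, Real.exp_pos (((m:ℝ))⁻¹ * ‖B‖), Real.exp_pos ‖B‖]
    -- decomposition
    have hdec : X - Y = (c • (A - B)) + ((X - 1 - u) - (Y - 1 - v)) := by
      rw [smul_sub, hudef, hvdef]
      abel
    have hXY : N (X - Y) ≤ ((m:ℝ))⁻¹ * N (A - B) + C * (((m:ℝ))⁻¹ ^ 2 * r) := by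
      calc N (X - Y) ≤ N (c • (A - B)) + N ((X - 1 - u) - (Y - 1 - v)) := by
            rw [hdec]; exact hN_add _ _
        _ ≤ ‖c‖ * N (A - B) + (N (X - 1 - u) + N (Y - 1 - v)) := by
            rw [hN_smul]
            exact add_le_add_right (Nsub _ _) _
        _ ≤ ((m:ℝ))⁻¹ * N (A - B) + (C * (((m:ℝ))⁻¹ ^ 2 * (‖A‖ ^ 2 * Real.exp ‖A‖))
              + C * (((m:ℝ))⁻¹ ^ 2 * (‖B‖ ^ 2 * Real.exp ‖B‖))) := by
            rw [hcnorm]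
            exact add_le_add_right (add_le_add htailA htailB) _
        _ = ((m:ℝ))⁻¹ * N (A - B) + C * (((m:ℝ))⁻¹ ^ 2 * r) := by rw [hrdef]; ring
    calc N (exp (Complex.I • A) - exp (Complex.I • B)) = N (X ^ m - Y ^ m) := by
          rw [hXm, hYm]
      _ ≤ m * N (X - Y) := hpow m X Y hXu hYu
      _ ≤ m * (((m:ℝ))⁻¹ * N (A - B) + C * (((m:ℝ))⁻¹ ^ 2 * r)) :=
          mul_le_mul_of_nonneg_left hXY hm0.le
      _ = N (A - B) + C * r * (1 / m) := by field_simp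
  -- take the limit m → ∞
  have hlim : Filter.Tendsto (fun m : ℕ => N (A - B) + C * r * (1 / (m:ℝ))) Filter.atTop
      (nhds (N (A - B) + C * r * 0)) :=
    Filter.Tendsto.add tendsto_const_nhds
      (Filter.Tendsto.mul tendsto_const_nhds tendsto_one_div_atTop_nhds_zero_nat)
  have hfin := ge_of_tendsto hlim (Filter.eventually_atTop.2 ⟨1, key⟩)
  simpa using hfin
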